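/- If C(K) = (e^{−r_$ T}/E[1/√f(T)]) ∫₀^∞ (√x − K/√x)_+ ρ(x) dx is the intermediate-currency call price where ρ is the density of f(T), then C is twice differentiable in K and ∂²C/∂K² = (e^{−r_$ T}/(√K · E[1/√f(T)])) ρ(K) for K > 0; consequently for any first-order homogeneous payoff g, the price V = (e^{−r_$T}/E[1/√f(T)]) ∫₀^∞ x^{−1/2} g(x;K) ρ(x) dx equals ∫₀^∞ g(x;K) C''(x) dx. -/

import Mathlib

open MeasureTheory

lemma stmt16_aux (w : ℝ → ℝ) (hw : IntegrableOn w (Set.Ioi 0))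
    (hxw : IntegrableOn (fun x => x * w x) (Set.Ioi 0)) (K : ℝ) :
    HasDerivAt (fun K => ∫ x in Set.Ioi (0:ℝ), max (x - K) 0 * w x)
      (∫ x in Set.Ioi (0:ℝ), -((Set.Ioi K).indicator (fun _ => (1:ℝ)) x) * w x) K := by
  have hKne : ∀ᵐ x ∂(volume.restrict (Set.Ioi (0:ℝ))), x ≠ K := by
    refine ae_restrict_of_ae ?_
    rw [ae_iff]
    simpa using measure_singleton K
  have h := hasDerivAt_integral_of_dominated_loc_of_lip (μ := volume.restrict (Set.Ioi (0:ℝ)))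
      (F := fun K x => max (x - K) 0 * w x)
      (F' := fun x => -((Set.Ioi K).indicator (fun _ => (1:ℝ)) x) * w x)
      (bound := fun x => |w x|) (s := Set.univ) (x₀ := K) Filter.univ_mem
      ?_ ?_ ?_ ?_ ?_ ?_
  · exact h.2
  · filter_upwards with K'
    exact (((continuous_id.sub continuous_const).max continuous_const).aestronglyMeasurable).mul
      hw.aestronglyMeasurable
  · -- integrability of F K₀
    have hb : Integrable (fun x => |x * w x| + |K| * |w x|) (volume.restrict (Set.Ioi 0)) :=
      hxw.abs.add (hw.abs.const_mul _)
    refine hb.mono' ((((continuous_id.sub continuous_const).max continuous_const).aestronglyMeasurable).mul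
      hw.aestronglyMeasurable) ?_
    rw [ae_restrict_iff' measurableSet_Ioi]
    filter_upwards with x hx
    have hx0 : (0:ℝ) < x := hx
    have h1 : max (x - K) 0 ≤ |x| + |K| := by
      refine max_le (by linarith [le_abs_self x, neg_abs_le K]) (by positivity)
    have h2 : ‖max (x - K) 0 * w x‖ = max (x - K) 0 * |w x| := by
      rw [norm_mul, Real.norm_eq_abs, Real.norm_eq_abs, abs_of_nonneg (le_max_right _ _)]
    rw [h2]
    calc max (x - K) 0 * |w x| ≤ (|x| + |K|) * |w x| :=
          mul_le_mul_of_nonneg_right h1 (abs_nonneg _)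
      _ = |x * w x| + |K| * |w x| := by rw [abs_mul]; ring
  · exact ((measurable_const.indicator measurableSet_Ioi).aestronglyMeasurable.neg).mul
      hw.aestronglyMeasurable
  · -- Lipschitz
    filter_upwards with x
    have : LipschitzWith (Real.nnabs (|w x|)) (fun K' => max (x - K') 0 * w x) := by
      refine LipschitzWith.of_dist_le_mul fun a b => ?_
      simp only [Real.dist_eq]
      have h1 : |max (x - a) 0 * w x - max (x - b) 0 * w x| = |max (x - a) 0 - max (x - b) 0| * |w x| := by
        rw [← sub_mul, abs_mul]
      rw [h1]
      have h2 : |max (x - a) 0 - max (x - b) 0| ≤ |a - b| := by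
        calc |max (x - a) 0 - max (x - b) 0| ≤ |(x - a) - (x - b)| := abs_max_sub_max_le_abs _ _ _
        _ = |a - b| := by rw [abs_sub_comm]; ring_nf
      calc |max (x - a) 0 - max (x - b) 0| * |w x| ≤ |a - b| * |w x| :=
            mul_le_mul_of_nonneg_right h2 (abs_nonneg _)
        _ = ↑(Real.nnabs |w x|) * |a - b| := by
            rw [Real.coe_nnabs, abs_abs, mul_comm]
    exact LipschitzWith.lipschitzOnWith this
  · exact hw.abs
  · -- a.e. differentiability
    filter_upwards [hKne] with x hx
    rcases lt_or_gt_of_ne hx with hlt | hgt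
    · -- x < K : function is 0 near K, indicator is 0
      have hind : (Set.Ioi K).indicator (fun _ => (1:ℝ)) x = 0 :=
        Set.indicator_of_notMem (by simpa using hlt.le.not_gt) _
      rw [hind]
      simp only [neg_zero, zero_mul]
      refine HasDerivAt.congr_of_eventuallyEq (hasDerivAt_const K 0) ?_
      filter_upwards [Ioi_mem_nhds hlt] with K' (hK' : x < K')
      simp [max_eq_right (by linarith : x - K' ≤ 0)]
    · -- x > K : function is (x - K') * w x near K
      have hind : (Set.Ioi K).indicator (fun _ => (1:ℝ)) x = 1 :=
        Set.indicator_of_mem hgt _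
      rw [hind]
      have hd : HasDerivAt (fun K' => (x - K') * w x) (-1 * w x) K :=
        ((hasDerivAt_id K).const_sub x).mul_const (w x)
      refine HasDerivAt.congr_of_eventuallyEq (by simpa using hd) ?_
      filter_upwards [Iio_mem_nhds hgt] with K' (hK' : K' < x)
      simp [max_eq_left (by linarith : (0:ℝ) ≤ x - K')]

section
variable (w : ℝ → ℝ)

lemma stmt16_aux2 (hw : IntegrableOn w (Set.Ioi 0))
    (hxw : IntegrableOn (fun x => x * w x) (Set.Ioi 0))
    (hwc : ContinuousOn w (Set.Ioi 0)) (c K : ℝ) (hK : 0 < K)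
    (haux : ∀ K' : ℝ, HasDerivAt (fun K => ∫ x in Set.Ioi (0:ℝ), max (x - K) 0 * w x)
      (∫ x in Set.Ioi (0:ℝ), -((Set.Ioi K').indicator (fun _ => (1:ℝ)) x) * w x) K') :
    deriv (deriv (fun K => c * ∫ x in Set.Ioi (0:ℝ), max (x - K) 0 * w x)) K = c * w K := by
  have hD1 : ∀ K' ∈ Set.Ioi (0:ℝ),
      HasDerivAt (fun K => c * ∫ x in Set.Ioi (0:ℝ), max (x - K) 0 * w x)
        (c * -(∫ x in Set.Ioi K', w x)) K' := by
    intro K' hK'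
    have h := (haux K').const_mul c
    have heq : ∫ x in Set.Ioi (0:ℝ), -((Set.Ioi K').indicator (fun _ => (1:ℝ)) x) * w x
        = -(∫ x in Set.Ioi K', w x) := by
      simp only [neg_mul]
      rw [integral_neg]
      congr 1
      have hptw : ∀ x, (Set.Ioi K').indicator (fun _ => (1:ℝ)) x * w x
          = (Set.Ioi K').indicator w x := by
        intro x; by_cases h : x ∈ Set.Ioi K' <;> simp [h]
      simp_rw [hptw]
      rw [setIntegral_indicator measurableSet_Ioi, Set.Ioi_inter_Ioi,
        sup_eq_right.mpr (le_of_lt hK')]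
    rw [heq] at h
    exact h
  have hev : deriv (fun K => c * ∫ x in Set.Ioi (0:ℝ), max (x - K) 0 * w x)
      =ᶠ[nhds K] fun K' => c * -(∫ x in Set.Ioi K', w x) := by
    filter_upwards [Ioi_mem_nhds hK] with K' hK' using (hD1 K' hK').deriv
  rw [hev.deriv_eq]
  set a : ℝ := K / 2 with ha
  have ha0 : 0 < a := by positivity
  have haK : a < K := by simp [ha]; linarith
  have hInt : IntervalIntegrable w volume a K := by
    refine (hw.mono_set ?_).intervalIntegrable
    rw [Set.uIcc_of_le haK.le]
    exact fun x hx => lt_of_lt_of_le ha0 hx.1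
  have hmeas : StronglyMeasurableAtFilter w (nhds K) volume :=
    ⟨Set.Ioi 0, Ioi_mem_nhds hK, hw.aestronglyMeasurable⟩
  have hcontK : ContinuousAt w K := hwc.continuousAt (Ioi_mem_nhds hK)
  have hFTC : HasDerivAt (fun u => ∫ x in a..u, w x) (w K) K :=
    intervalIntegral.integral_hasDerivAt_right hInt hmeas hcontK
  have h2 : HasDerivAt (fun u => c * ((∫ x in a..u, w x) - ∫ x in Set.Ioi a, w x))
      (c * w K) K := (hFTC.sub_const _).const_mul c
  refine HasDerivAt.deriv (HasDerivAt.congr_of_eventuallyEq h2 ?_)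
  filter_upwards [Ioi_mem_nhds haK] with K' (hK' : a < K')
  have hsplit : ∫ x in Set.Ioi a, w x = (∫ x in a..K', w x) + ∫ x in Set.Ioi K', w x := by
    rw [intervalIntegral.integral_of_le hK'.le]
    rw [← setIntegral_union (Set.Ioc_disjoint_Ioi le_rfl) measurableSet_Ioi
      (hw.mono_set fun x hx => lt_of_lt_of_le ha0 hx.1.le)
      (hw.mono_set fun x hx => lt_trans (lt_of_lt_of_le ha0 hK'.le) hx)]
    rw [Set.Ioc_union_Ioi_eq_Ioi hK'.le]
  rw [hsplit]; ring
end

/-- Model-free pricing for a single pair. If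
`C(K) = (e^{−r_$ T}/I) ∫₀^∞ (√x − K/√x)₊ ρ(x) dx`, where `ρ` is the (continuous) density
of `f(T)` and `I = E[1/√f(T)] = ∫₀^∞ x^{−1/2} ρ(x) dx`, then
`C''(K) = (e^{−r_$ T}/(√K·I)) ρ(K)` for `K > 0`; consequently, for any first-order
homogeneous payoff `g`, the price `V = (e^{−r_$ T}/I) ∫₀^∞ x^{−1/2} g(x;K) ρ(x) dx`
equals `∫₀^∞ g(x;K) C''(x) dx`. -/
theorem stmt_16 (ρ : ℝ → ℝ) (rUSD T I : ℝ)
    (hρc : ContinuousOn ρ (Set.Ioi 0)) (hρ0 : ∀ x ∈ Set.Ioi (0 : ℝ), 0 ≤ ρ x)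
    (hI : 0 < I)
    (hIdef : I = ∫ x in Set.Ioi (0 : ℝ), (Real.sqrt x)⁻¹ * ρ x)
    (hint1 : IntegrableOn (fun x => Real.sqrt x * ρ x) (Set.Ioi 0))
    (hint2 : IntegrableOn (fun x => (Real.sqrt x)⁻¹ * ρ x) (Set.Ioi 0)) :
    let C : ℝ → ℝ := fun K =>
      (Real.exp (-(rUSD * T)) / I) *
        ∫ x in Set.Ioi (0 : ℝ), max (Real.sqrt x - K / Real.sqrt x) 0 * ρ x
    (∀ K > (0 : ℝ),
      deriv (deriv C) K = (Real.exp (-(rUSD * T)) / (Real.sqrt K * I)) * ρ K)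
    ∧ (∀ g : ℝ → ℝ → ℝ,
        (∀ a > (0 : ℝ), ∀ x > (0 : ℝ), ∀ K ≥ (0 : ℝ), a * g x K = g (a * x) (a * K)) →
        ∀ K ≥ (0 : ℝ),
        IntegrableOn (fun x => (Real.sqrt x)⁻¹ * g x K * ρ x) (Set.Ioi 0) →
        (Real.exp (-(rUSD * T)) / I) *
            (∫ x in Set.Ioi (0 : ℝ), (Real.sqrt x)⁻¹ * g x K * ρ x)
          = ∫ x in Set.Ioi (0 : ℝ), g x K * deriv (deriv C) x) := by
  intro C
  set w : ℝ → ℝ := fun x => (Real.sqrt x)⁻¹ * ρ x with hwdef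
  set c : ℝ := Real.exp (-(rUSD * T)) / I with hc
  have hw : IntegrableOn w (Set.Ioi 0) := hint2
  have hxw : IntegrableOn (fun x => x * w x) (Set.Ioi 0) := by
    refine hint1.congr_fun (fun x hx => ?_) measurableSet_Ioi
    have hx0 : (0:ℝ) < x := hx
    have hs : (0:ℝ) < Real.sqrt x := Real.sqrt_pos.mpr hx0
    have hxs : x * (Real.sqrt x)⁻¹ = Real.sqrt x := by
      rw [← Real.mul_self_sqrt hx0.le]; field_simp
      rw [Real.sqrt_sq hs.le]
    simp only [hwdef]
    rw [← mul_assoc, hxs]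
  have hwc : ContinuousOn w (Set.Ioi 0) := by
    refine ContinuousOn.mul ?_ hρc
    exact (Real.continuous_sqrt.continuousOn.inv₀
      fun x hx => (Real.sqrt_pos.mpr hx).ne')
  have hC : C = fun K => c * ∫ x in Set.Ioi (0:ℝ), max (x - K) 0 * w x := by
    funext K
    show c * _ = c * _
    congr 1
    refine setIntegral_congr_fun measurableSet_Ioi (fun x hx => ?_)
    have hx0 : (0:ℝ) < x := hx
    have hs : (0:ℝ) < Real.sqrt x := Real.sqrt_pos.mpr hx0
    have h1 : Real.sqrt x - K / Real.sqrt x = (x - K) / Real.sqrt x := by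
      rw [eq_div_iff hs.ne', sub_mul, div_mul_cancel₀ _ hs.ne', Real.mul_self_sqrt hx0.le]
    have h2 : max ((x - K) / Real.sqrt x) 0 = max (x - K) 0 / Real.sqrt x := by
      rw [← max_div_div_right hs.le, zero_div]
    rw [h1, h2]
    simp only [hwdef]
    field_simp
  have hpart1 : ∀ K > (0:ℝ),
      deriv (deriv C) K = (Real.exp (-(rUSD * T)) / (Real.sqrt K * I)) * ρ K := by
    intro K hK
    have hs : (0:ℝ) < Real.sqrt K := Real.sqrt_pos.mpr hK
    rw [hC, stmt16_aux2 w hw hxw hwc c K hK (fun K' => stmt16_aux w hw hxw K')]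
    simp only [hwdef, hc]
    have hdiv : Real.exp (-(rUSD*T)) / (Real.sqrt K * I)
        = Real.exp (-(rUSD*T)) / I * (Real.sqrt K)⁻¹ := by
      field_simp
    rw [hdiv]; ring
  refine ⟨hpart1, ?_⟩
  intro g _ K _ _
  have hR : ∫ x in Set.Ioi (0:ℝ), g x K * deriv (deriv C) x
      = ∫ x in Set.Ioi (0:ℝ), c * ((Real.sqrt x)⁻¹ * g x K * ρ x) := by
    refine setIntegral_congr_fun measurableSet_Ioi (fun x hx => ?_)
    have hx0 : (0:ℝ) < x := hx
    have hs : (0:ℝ) < Real.sqrt x := Real.sqrt_pos.mpr hx0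
    rw [hpart1 x hx0]
    rw [hc]
    field_simp
  rw [hR, integral_const_mul]
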